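/- For 0 < β < x < 1/2 with x(1-x) > β(1-β), the function e(x) = exp(-(k/(1-2x)) D(B(x)‖B(β))) is convex at x whenever k ≥ 4(1-2x)/Λ(x) + (1-2x)³/(x(1-x)Λ(x)²), where Λ(x) = ln(x(1-x)/(β(1-β))) > 0. -/

import Mathlib

/-- Kullback–Leibler divergence `D(B(x) ‖ B(β))` between Bernoulli distributions. -/
noncomputable def binKL (x β : ℝ) : ℝ :=
  x * Real.log (x / β) + (1 - x) * Real.log ((1 - x) / (1 - β))

/-- Smooth version of `binKL` with division inside logs removed. -/
noncomputable def eF (β y : ℝ) : ℝ :=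
  y * (Real.log y - Real.log β) + (1 - y) * (Real.log (1 - y) - Real.log (1 - β))

/-- `Λ(y) = log y + log(1-y) - log β - log(1-β)`. -/
noncomputable def eL (β y : ℝ) : ℝ :=
  Real.log y + Real.log (1 - y) - Real.log β - Real.log (1 - β)

/-- `e(y)` (smooth version). -/
noncomputable def eE (β k y : ℝ) : ℝ := Real.exp (-(k / (1 - 2 * y)) * eF β y)

/-- First derivative of `eE`. -/
noncomputable def eG (β k y : ℝ) : ℝ := eE β k y * (-(k * eL β y) / (1 - 2 * y) ^ 2)

lemma hasDerivAt_eE (β k : ℝ) {y : ℝ} (hy0 : 0 < y) (hy2 : y < 1 / 2) :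
    HasDerivAt (fun t : ℝ => eE β k t) (eG β k y) y := by
  have hy1 : (0:ℝ) < 1 - y := by linarith
  have hcy : (0:ℝ) < 1 - 2 * y := by linarith
  have hlog1 : HasDerivAt (fun t : ℝ => Real.log t) y⁻¹ y := Real.hasDerivAt_log hy0.ne'
  have hlin : HasDerivAt (fun t : ℝ => 1 - t) (-1 : ℝ) y := by
    simpa using (hasDerivAt_id y).const_sub 1
  have hlog2 : HasDerivAt (fun t : ℝ => Real.log (1 - t)) (-(1 - y)⁻¹) y := by
    have h := (Real.hasDerivAt_log hy1.ne').comp y hlin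
    exact h.congr_deriv (by ring)
  have t2 : HasDerivAt (fun t : ℝ => t * (Real.log t - Real.log β))
      (1 * (Real.log y - Real.log β) + y * y⁻¹) y :=
    (hasDerivAt_id' (x := y)).mul (hlog1.sub_const (Real.log β))
  have t3 : HasDerivAt (fun t : ℝ => (1 - t) * (Real.log (1 - t) - Real.log (1 - β)))
      ((-1) * (Real.log (1 - y) - Real.log (1 - β)) + (1 - y) * (-(1 - y)⁻¹)) y :=
    hlin.mul (hlog2.sub_const (Real.log (1 - β)))
  have hFd : HasDerivAt (fun t : ℝ => eF β t)
      ((1 * (Real.log y - Real.log β) + y * y⁻¹) +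
        ((-1) * (Real.log (1 - y) - Real.log (1 - β)) + (1 - y) * (-(1 - y)⁻¹))) y := by
    unfold eF
    exact t2.add t3
  have hlin2 : HasDerivAt (fun t : ℝ => 1 - 2 * t) (-2 : ℝ) y := by
    simpa using ((hasDerivAt_id y).const_mul 2).const_sub 1
  have hinv : HasDerivAt (fun t : ℝ => (1 - 2 * t)⁻¹) (2 / (1 - 2 * y) ^ 2) y := by
    have h := hlin2.inv hcy.ne'
    refine h.congr_deriv ?_
    field_simp
  have hu : HasDerivAt (fun t : ℝ => -(k / (1 - 2 * t))) (-(2 * k / (1 - 2 * y) ^ 2)) y := by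
    have h := (hinv.const_mul k).neg
    have h2 : (fun t : ℝ => -(k / (1 - 2 * t))) = fun t : ℝ => -(k * (1 - 2 * t)⁻¹) := by
      funext t; rw [div_eq_mul_inv]
    rw [h2]
    refine h.congr_deriv ?_
    ring
  have hg : HasDerivAt (fun t : ℝ => -(k / (1 - 2 * t)) * eF β t)
      (-(k * eL β y) / (1 - 2 * y) ^ 2) y := by
    have h := hu.mul hFd
    refine h.congr_deriv ?_
    unfold eF eL
    field_simp
    ring
  unfold eG eE
  exact hg.exp

lemma hasDerivAt_h (β k : ℝ) {y : ℝ} (hy0 : 0 < y) (hy2 : y < 1 / 2) :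
    HasDerivAt (fun t : ℝ => -(k * eL β t) / (1 - 2 * t) ^ 2)
      ((-(k * (y⁻¹ + -(1 - y)⁻¹))) * ((1 - 2 * y) ^ 2)⁻¹ +
        (-(k * eL β y)) * (4 / (1 - 2 * y) ^ 3)) y := by
  have hy1 : (0:ℝ) < 1 - y := by linarith
  have hcy : (0:ℝ) < 1 - 2 * y := by linarith
  have hlog1 : HasDerivAt (fun t : ℝ => Real.log t) y⁻¹ y := Real.hasDerivAt_log hy0.ne'
  have hlin : HasDerivAt (fun t : ℝ => 1 - t) (-1 : ℝ) y := by
    simpa using (hasDerivAt_id y).const_sub 1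
  have hlog2 : HasDerivAt (fun t : ℝ => Real.log (1 - t)) (-(1 - y)⁻¹) y := by
    have h := (Real.hasDerivAt_log hy1.ne').comp y hlin
    exact h.congr_deriv (by ring)
  have hLd : HasDerivAt (fun t : ℝ => eL β t) (y⁻¹ + -(1 - y)⁻¹) y := by
    unfold eL
    exact ((hlog1.add hlog2).sub_const (Real.log β)).sub_const (Real.log (1 - β))
  have hlin2 : HasDerivAt (fun t : ℝ => 1 - 2 * t) (-2 : ℝ) y := by
    simpa using ((hasDerivAt_id y).const_mul 2).const_sub 1
  have hpow : HasDerivAt (fun t : ℝ => (1 - 2 * t) ^ 2) ((2:ℕ) * (1 - 2 * y) ^ (2 - 1) * (-2)) y :=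
    hlin2.pow 2
  have hinv2 : HasDerivAt (fun t : ℝ => ((1 - 2 * t) ^ 2)⁻¹) (4 / (1 - 2 * y) ^ 3) y := by
    have h := hpow.inv (pow_ne_zero 2 hcy.ne')
    refine h.congr_deriv ?_
    field_simp
    ring
  have h := ((hLd.const_mul k).neg).mul hinv2
  simp only [div_eq_mul_inv]
  exact h.congr_deriv (by simp only [Pi.neg_apply, div_eq_mul_inv])

theorem error_exponent_convexity_condition (β k x : ℝ) (hβ0 : 0 < β) (hβx : β < x)
    (hx : x < 1 / 2) (hΛ : β * (1 - β) < x * (1 - x))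
    (hk : 4 * (1 - 2 * x) / Real.log (x * (1 - x) / (β * (1 - β))) +
            (1 - 2 * x) ^ 3 /
              (x * (1 - x) * (Real.log (x * (1 - x) / (β * (1 - β)))) ^ 2) ≤ k) :
    0 ≤ deriv (deriv (fun y : ℝ => Real.exp (-(k / (1 - 2 * y)) * binKL y β))) x := by
  have hx0 : 0 < x := hβ0.trans hβx
  have hx1 : x < 1 := by linarith
  have hβ2 : β < 1 / 2 := hβx.trans hx
  have hβ1 : (0:ℝ) < 1 - β := by linarith
  have hc : (0:ℝ) < 1 - 2 * x := by linarith
  have h1x : (0:ℝ) < 1 - x := by linarith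
  have hS : Set.Ioo (0:ℝ) (1/2) ∈ nhds x := isOpen_Ioo.mem_nhds ⟨hx0, hx⟩
  -- the given function agrees with eE near x
  have heE : (fun y : ℝ => Real.exp (-(k / (1 - 2 * y)) * binKL y β)) =ᶠ[nhds x]
      (fun y : ℝ => eE β k y) := by
    filter_upwards [hS] with y hy
    have hy0 : (0:ℝ) < y := hy.1
    have hy1 : (0:ℝ) < 1 - y := by have := hy.2; linarith
    unfold eE eF binKL
    rw [Real.log_div hy0.ne' hβ0.ne', Real.log_div hy1.ne' hβ1.ne']
  -- first derivative of eE equals eG near x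
  have hEG : deriv (fun y : ℝ => eE β k y) =ᶠ[nhds x] (fun y : ℝ => eG β k y) := by
    filter_upwards [hS] with y hy
    exact (hasDerivAt_eE β k hy.1 hy.2).deriv
  have step1 : deriv (deriv (fun y : ℝ => Real.exp (-(k / (1 - 2 * y)) * binKL y β))) x
      = deriv (fun y : ℝ => eG β k y) x := by
    have h1 := heE.deriv (𝕜 := ℝ)
    calc deriv (deriv (fun y : ℝ => Real.exp (-(k / (1 - 2 * y)) * binKL y β))) x
        = deriv (deriv (fun y : ℝ => eE β k y)) x := h1.deriv_eq
      _ = deriv (fun y : ℝ => eG β k y) x := hEG.deriv_eq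
  rw [step1]
  -- compute the derivative of eG at x
  have hEdx := hasDerivAt_eE β k hx0 hx
  have hhx := hasDerivAt_h β k hx0 hx
  have hGd : HasDerivAt (fun y : ℝ => eG β k y)
      (eG β k x * (-(k * eL β x) / (1 - 2 * x) ^ 2) +
        eE β k x * ((-(k * (x⁻¹ + -(1 - x)⁻¹))) * ((1 - 2 * x) ^ 2)⁻¹ +
          (-(k * eL β x)) * (4 / (1 - 2 * x) ^ 3))) x := by
    unfold eG
    exact hEdx.mul hhx
  rw [hGd.deriv]
  -- now the arithmetic
  set Λ : ℝ := Real.log (x * (1 - x) / (β * (1 - β))) with hΛdef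
  have hΛpos : 0 < Λ := Real.log_pos ((one_lt_div (by positivity)).mpr hΛ)
  have hLx : eL β x = Λ := by
    rw [hΛdef, Real.log_div (by positivity) (by positivity),
      Real.log_mul hx0.ne' h1x.ne', Real.log_mul hβ0.ne' hβ1.ne']
    unfold eL
    ring
  have hkpos : 0 < k := lt_of_lt_of_le (by positivity) hk
  have key : 4 * (1 - 2 * x) * Λ * (x * (1 - x)) + (1 - 2 * x) ^ 3 ≤ k * (Λ ^ 2 * (x * (1 - x))) := by
    have h2 := mul_le_mul_of_nonneg_right hk (le_of_lt (by positivity : (0:ℝ) < Λ ^ 2 * (x * (1 - x))))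
    calc 4 * (1 - 2 * x) * Λ * (x * (1 - x)) + (1 - 2 * x) ^ 3
        = (4 * (1 - 2 * x) / Λ + (1 - 2 * x) ^ 3 / (x * (1 - x) * Λ ^ 2)) * (Λ ^ 2 * (x * (1 - x))) := by
          field_simp
      _ ≤ k * (Λ ^ 2 * (x * (1 - x))) := h2
  rw [hLx]
  unfold eG
  rw [hLx]
  have hrw : eE β k x * (-(k * Λ) / (1 - 2 * x) ^ 2) * (-(k * Λ) / (1 - 2 * x) ^ 2) +
      eE β k x * ((-(k * (x⁻¹ + -(1 - x)⁻¹))) * ((1 - 2 * x) ^ 2)⁻¹ +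
        (-(k * Λ)) * (4 / (1 - 2 * x) ^ 3))
      = eE β k x * (k / ((1 - 2 * x) ^ 4 * (x * (1 - x)))) *
          (k * (Λ ^ 2 * (x * (1 - x))) - (4 * (1 - 2 * x) * Λ * (x * (1 - x)) + (1 - 2 * x) ^ 3)) := by
    field_simp
    ring
  rw [hrw]
  have h1 : (0:ℝ) ≤ eE β k x := (Real.exp_pos _).le
  have h2 : (0:ℝ) ≤ k / ((1 - 2 * x) ^ 4 * (x * (1 - x))) := by positivity
  have h3 : (0:ℝ) ≤ k * (Λ ^ 2 * (x * (1 - x))) - (4 * (1 - 2 * x) * Λ * (x * (1 - x)) + (1 - 2 * x) ^ 3) := by linarith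
  positivity
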